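/- arXiv:2007.10464 — 3 statements merged into one kernel-verified Lean document; each statement's English description precedes it below -/
import Mathlib

section
/- Let Φ be the map on PG(2,8) induced by coordinatewise squaring (the Frobenius), and let Γ = {τ_c : tr(c) = 0}. Then conjugation by Φ permutes the three nontrivial elements of Γ cyclically: Φ ∘ τ_c ∘ Φ⁻¹ = τ_{c²}, and the group generated by Γ and Φ is isomorphic to the alternating group A_4. -/
/-- The elation `τ_c : (x,y,z) ↦ (x + cz, y + c²z, z)` on `F₈³`. -/
noncomputable def tauMap (c : GaloisField 2 3) (p : Fin 3 → GaloisField 2 3) :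
    Fin 3 → GaloisField 2 3 :=
  ![p 0 + c * p 2, p 1 + c ^ 2 * p 2, p 2]

/-- The Frobenius collineation of `PG(2,8)`, coordinatewise squaring. -/
noncomputable def frobMap (p : Fin 3 → GaloisField 2 3) : Fin 3 → GaloisField 2 3 :=
  fun i => (p i) ^ 2

abbrev F8 := GaloisField 2 3
noncomputable instance : Fintype F8 := Fintype.ofFinite _

lemma F8.card : Fintype.card F8 = 8 := by
  rw [← Nat.card_eq_fintype_card, GaloisField.card 2 3 (by norm_num)]; norm_num

lemma F8.pow8 (x : F8) : x ^ 8 = x := by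
  have h := FiniteField.pow_card x
  rwa [F8.card] at h

lemma F8.sq_add (a b : F8) : (a + b) ^ 2 = a ^ 2 + b ^ 2 := by
  rw [add_pow_char]

abbrev E := Function.End (Fin 3 → F8)

noncomputable def tauE (c : F8) : E := tauMap c
noncomputable def frobE : E := frobMap

lemma E.mul_apply (f g : E) (p : Fin 3 → F8) : (f * g) p = f (g p) := rfl
lemma E.one_apply (p : Fin 3 → F8) : (1 : E) p = p := rfl

lemma tauE_apply (c : F8) (u v w : F8) :
    tauE c ![u, v, w] = ![u + c * w, v + c ^ 2 * w, w] := by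
  simp [tauE, tauMap]

lemma frobE_apply (u v w : F8) : frobE ![u, v, w] = ![u ^ 2, v ^ 2, w ^ 2] := by
  funext i; fin_cases i <;> simp [frobE, frobMap]

lemma fin3_eta (p : Fin 3 → F8) : p = ![p 0, p 1, p 2] := by
  funext i; fin_cases i <;> simp

lemma tau_mul (c d : F8) : tauE c * tauE d = tauE (c + d) := by
  funext p
  rw [E.mul_apply]
  funext i
  fin_cases i <;> simp [tauE, tauMap, F8.sq_add] <;> ring

lemma tau_zero : tauE 0 = 1 := by
  funext p
  rw [E.one_apply, fin3_eta p, tauE_apply]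
  simp

lemma frob_tau (c : F8) : frobE * tauE c = tauE (c ^ 2) * frobE := by
  funext p
  rw [E.mul_apply, E.mul_apply]
  funext i
  fin_cases i <;> simp [tauE, tauMap, frobE, frobMap, F8.sq_add, mul_pow] <;> ring

lemma frob_pow_apply (k : ℕ) (p : Fin 3 → F8) :
    (frobE ^ k) p = fun i => (p i) ^ 2 ^ k := by
  induction k generalizing p with
  | zero => rw [pow_zero, E.one_apply]; simp
  | succ n ih =>
    have h : (frobE ^ (n+1)) p = (frobE ^ n) (frobE p) := by
      rw [pow_succ]; rfl
    rw [h, ih]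
    funext i
    show (frobE p i) ^ 2 ^ n = _
    show ((p i) ^ 2) ^ 2 ^ n = _
    rw [← pow_mul]
    congr 1
    rw [pow_succ]
    ring

lemma frob_cube : frobE ^ 3 = 1 := by
  funext p
  rw [frob_pow_apply, E.one_apply]
  funext i
  norm_num
  exact F8.pow8 (p i)

noncomputable def tr (c : F8) : F8 := c + c ^ 2 + c ^ 4

lemma tr_sq {c : F8} (h : tr c = 0) : tr (c ^ 2) = 0 := by
  have h8 : c ^ 8 = c := F8.pow8 c
  simp only [tr] at *
  have : (c ^ 2) ^ 4 = c := by rw [← pow_mul]; norm_num [h8]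
  rw [this, ← pow_mul]
  norm_num
  linear_combination h

lemma tr_pow2 {c : F8} (h : tr c = 0) (k : ℕ) : tr (c ^ 2 ^ k) = 0 := by
  induction k with
  | zero => simpa using h
  | succ n ih =>
    have : c ^ 2 ^ (n+1) = (c ^ 2 ^ n) ^ 2 := by rw [← pow_mul, pow_succ]
    rw [this]; exact tr_sq ih

lemma tr_add {c d : F8} (hc : tr c = 0) (hd : tr d = 0) : tr (c + d) = 0 := by
  simp only [tr] at *
  have h2 : (c + d) ^ 2 = c ^ 2 + d ^ 2 := F8.sq_add c d
  have h4 : (c + d) ^ 4 = c ^ 4 + d ^ 4 := by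
    have : (c + d) ^ 4 = ((c + d) ^ 2) ^ 2 := by ring
    rw [this, h2, F8.sq_add, ← pow_mul, ← pow_mul]
  rw [h2, h4]
  linear_combination hc + hd

noncomputable def gens : Set E :=
  {frobMap} ∪ {f | ∃ c : GaloisField 2 3, c + c ^ 2 + c ^ 4 = 0 ∧ f = tauMap c}

noncomputable def M : Submonoid E := Submonoid.closure gens

lemma frob_pow_tau (k : ℕ) (c : F8) :
    frobE ^ k * tauE c = tauE (c ^ 2 ^ k) * frobE ^ k := by
  induction k generalizing c with
  | zero => simp
  | succ n ih =>
    rw [pow_succ, mul_assoc, frob_tau c, ← mul_assoc, ih (c ^ 2), mul_assoc, ← pow_succ]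
    congr 2
    rw [← pow_mul, pow_succ]
    ring

lemma nf {f : E} (hf : f ∈ M) :
    ∃ c k, tr c = 0 ∧ k < 3 ∧ f = tauE c * frobE ^ k := by
  induction hf using Submonoid.closure_induction with
  | mem f hf =>
    rcases hf with h | ⟨c, hc, rfl⟩
    · exact ⟨0, 1, by simp [tr], by norm_num, by
        rw [tau_zero, one_mul, pow_one]; exact h⟩
    · exact ⟨c, 0, hc, by norm_num, by rw [pow_zero, mul_one]; rfl⟩
  | one => exact ⟨0, 0, by simp [tr], by norm_num, by rw [tau_zero, pow_zero, mul_one]⟩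
  | mul f g _ _ ihf ihg =>
    obtain ⟨c, k, hc, hk, rfl⟩ := ihf
    obtain ⟨d, j, hd, hj, rfl⟩ := ihg
    refine ⟨c + d ^ 2 ^ k, (k + j) % 3, tr_add hc (tr_pow2 hd k), Nat.mod_lt _ (by norm_num), ?_⟩
    rw [mul_assoc, ← mul_assoc (frobE ^ k), frob_pow_tau, mul_assoc, ← pow_add,
      ← mul_assoc, tau_mul, ← pow_eq_pow_mod _ frob_cube]

lemma tr_hom (a b : F8) : tr (a + b) = tr a + tr b := by
  simp only [tr]
  have h2 := F8.sq_add a b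
  have h4 : (a + b) ^ 4 = a ^ 4 + b ^ 4 := by
    have h : (a + b) ^ 4 = ((a + b) ^ 2) ^ 2 := by ring
    rw [h, h2, F8.sq_add, ← pow_mul, ← pow_mul]
  rw [h2, h4]
  ring

lemma tr_sq_self (c : F8) : tr c ^ 2 = tr c := by
  simp only [tr]
  have h8 : c ^ 8 = c := F8.pow8 c
  rw [F8.sq_add, F8.sq_add, ← pow_mul, ← pow_mul]
  norm_num
  rw [h8]
  ring

lemma tr_zero_or_one (c : F8) : tr c = 0 ∨ tr c = 1 := by
  have h := tr_sq_self c
  have : tr c * (tr c - 1) = 0 := by linear_combination h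
  rcases mul_eq_zero.1 this with h' | h'
  · exact Or.inl h'
  · right; linear_combination h'

noncomputable instance : DecidableEq F8 := Classical.decEq _

lemma exists_tr_one : ∃ c : F8, tr c = 1 := by
  have hne : (Polynomial.X + Polynomial.X ^ 2 + Polynomial.X ^ 4 : Polynomial F8) ≠ 0 := by
    intro h
    have := congrArg (Polynomial.coeff · 4) h
    simp [Polynomial.coeff_X, Polynomial.coeff_X_pow] at this
  have hdeg : ((Polynomial.X + Polynomial.X ^ 2 + Polynomial.X ^ 4 : Polynomial F8).natDegree
      : Cardinal) < Cardinal.mk F8 := by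
    have hd : (Polynomial.X + Polynomial.X ^ 2 + Polynomial.X ^ 4 : Polynomial F8).natDegree ≤ 4 := by
      compute_degree
    have h8 : (Cardinal.mk F8) = 8 := by
      rw [Cardinal.mk_fintype, F8.card]; norm_num
    rw [h8]
    calc ((Polynomial.X + Polynomial.X ^ 2 + Polynomial.X ^ 4 : Polynomial F8).natDegree : Cardinal)
        ≤ 4 := by exact_mod_cast hd
      _ < 8 := by norm_num
  obtain ⟨r, hr⟩ := Polynomial.exists_eval_ne_zero_of_natDegree_lt_card
      (Polynomial.X + Polynomial.X ^ 2 + Polynomial.X ^ 4 : Polynomial F8) hne hdeg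
  refine ⟨r, ?_⟩
  have h0 : tr r ≠ 0 := by
    intro h
    apply hr
    simpa [tr] using h
  rcases tr_zero_or_one r with h | h
  · exact absurd h h0
  · exact h

open Finset in
lemma card_tr0 : (Finset.univ.filter (fun c : F8 => tr c = 0)).card = 4 := by
  classical
  obtain ⟨c₀, hc₀⟩ := exists_tr_one
  have hbij : (Finset.univ.filter (fun c : F8 => tr c = 0)).card
      = (Finset.univ.filter (fun c : F8 => tr c = 1)).card := by
    apply Finset.card_bij' (fun a _ => a + c₀) (fun b _ => b + c₀)
    · intro a ha
      simp only [Finset.mem_filter, Finset.mem_univ, true_and] at *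
      rw [tr_hom, ha, hc₀, zero_add]
    · intro b hb
      simp only [Finset.mem_filter, Finset.mem_univ, true_and] at *
      rw [tr_hom, hb, hc₀]
      exact CharTwo.add_self_eq_zero 1
    · intro a _
      rw [add_assoc, CharTwo.add_self_eq_zero, add_zero]
    · intro b _
      rw [add_assoc, CharTwo.add_self_eq_zero, add_zero]
  have hsplit := Finset.card_filter_add_card_filter_not
      (s := (Finset.univ : Finset F8)) (p := fun c => tr c = 0)
  have hne : Finset.univ.filter (fun c : F8 => ¬ tr c = 0)
      = Finset.univ.filter (fun c : F8 => tr c = 1) := by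
    apply Finset.filter_congr
    intro x _
    rcases tr_zero_or_one x with h | h <;> simp [h]
  rw [hne, ← hbij, Finset.card_univ, F8.card] at hsplit
  omega

abbrev K := {c : F8 // tr c = 0}

lemma card_K : Fintype.card K = 4 := by
  rw [Fintype.card_subtype]
  exact card_tr0

lemma tr_zero' : tr (0 : F8) = 0 := by simp [tr]

lemma one_not_tr : tr (1 : F8) ≠ 0 := by
  simp only [tr, one_pow]
  rw [CharTwo.add_self_eq_zero, zero_add]
  exact one_ne_zero

lemma exists_u : ∃ u : F8, tr u = 0 ∧ u ≠ 0 := by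
  by_contra h
  push_neg at h
  have hsub : Finset.univ.filter (fun c : F8 => tr c = 0) ⊆ {0} := by
    intro x hx
    simp only [Finset.mem_filter, Finset.mem_univ, true_and] at hx
    simp [h x hx]
  have := Finset.card_le_card hsub
  rw [card_tr0] at this
  simp at this

lemma nf_eval (c : F8) (k : ℕ) (u v : F8) :
    (tauE c * frobE ^ k) ![u, v, 1] = ![u ^ 2 ^ k + c, v ^ 2 ^ k + c ^ 2, 1] := by
  rw [E.mul_apply]
  have h : (frobE ^ k) ![u, v, 1] = ![u ^ 2 ^ k, v ^ 2 ^ k, 1] := by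
    rw [frob_pow_apply]
    funext i
    fin_cases i <;> simp
  rw [h]
  funext i
  fin_cases i <;> simp [tauE, tauMap]

lemma tauE_mem {c : F8} (hc : tr c = 0) : tauE c ∈ M :=
  Submonoid.subset_closure (Or.inr ⟨c, hc, rfl⟩)

lemma frobE_mem : frobE ∈ M := Submonoid.subset_closure (Or.inl rfl)

lemma act_mem (f : M) (x : K) : tr ((f.1 ![x.1, 0, 1]) 0) = 0 := by
  obtain ⟨c, k, hc, hk, hf⟩ := nf f.2
  rw [hf, nf_eval]
  simp only [Matrix.cons_val_zero]
  exact tr_add (tr_pow2 x.2 k) hc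

noncomputable def kfun (f : M) : K → K := fun x => ⟨(f.1 ![x.1, 0, 1]) 0, act_mem f x⟩

lemma sq_inj : Function.Injective (fun x : F8 => x ^ 2) := by
  have h := (frobenius F8 2).injective
  intro a b hab
  apply h
  rw [frobenius_def, frobenius_def]
  exact hab

lemma pow2k_inj (k : ℕ) : Function.Injective (fun x : F8 => x ^ 2 ^ k) := by
  induction k with
  | zero => intro a b h; simpa using h
  | succ n ih =>
    have he : (fun x : F8 => x ^ 2 ^ (n+1)) = (fun x : F8 => x ^ 2 ^ n) ∘ (fun x : F8 => x ^ 2) := by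
      funext x
      simp only [Function.comp_apply]
      rw [← pow_mul]
      congr 1
      rw [pow_succ]
      ring
    rw [he]
    exact ih.comp sq_inj

lemma kfun_inj (f : M) : Function.Injective (kfun f) := by
  obtain ⟨c, k, hc, hk, hf⟩ := nf f.2
  intro x y hxy
  apply Subtype.ext
  have h := congrArg Subtype.val hxy
  simp only [kfun, hf, nf_eval, Matrix.cons_val_zero] at h
  have h2 : x.1 ^ 2 ^ k = y.1 ^ 2 ^ k := by
    have := add_right_cancel h
    exact this
  exact pow2k_inj k h2

lemma kfun_bij (f : M) : Function.Bijective (kfun f) :=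
  Finite.injective_iff_bijective.1 (kfun_inj f)

noncomputable def chi : M →* Equiv.Perm K where
  toFun f := Equiv.ofBijective (kfun f) (kfun_bij f)
  map_one' := by
    refine Equiv.ext fun x => Subtype.ext ?_
    show ((1 : E) ![x.1, 0, 1]) 0 = x.1
    rw [E.one_apply]
    simp
  map_mul' f g := by
    refine Equiv.ext fun x => Subtype.ext ?_
    show ((f.1 * g.1) ![x.1, 0, 1]) 0 = (f.1 ![(g.1 ![x.1, 0, 1]) 0, 0, 1]) 0
    obtain ⟨c, k, hc, hk, hf⟩ := nf f.2
    obtain ⟨d, j, hd, hj, hg⟩ := nf g.2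
    rw [E.mul_apply, hf, hg, nf_eval, nf_eval]
    simp only [Matrix.cons_val_zero]
    rw [nf_eval]
    simp

lemma exp_inj {u : F8} (hu : u ≠ 0) (hu1 : u ≠ 1) {k j : ℕ} (hk : k < 3) (hj : j < 3)
    (h : u ^ 2 ^ k = u ^ 2 ^ j) : k = j := by
  have h7 : orderOf u = 7 := by
    have hu8 : u ^ 8 = u := F8.pow8 u
    have hu7 : u ^ 7 = 1 := by
      have h1 : u ^ 7 * u = 1 * u := by
        rw [one_mul, ← pow_succ]
        exact hu8
      exact mul_right_cancel₀ hu h1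
    have hdvd : orderOf u ∣ 7 := orderOf_dvd_of_pow_eq_one hu7
    rcases (by norm_num : Nat.Prime 7).eq_one_or_self_of_dvd _ hdvd with h1 | h1
    · exact absurd (orderOf_eq_one_iff.1 h1) hu1
    · exact h1
  have key : ∀ a b : ℕ, a ≤ b → b < 3 → u ^ 2 ^ a = u ^ 2 ^ b → a = b := by
    intro a b hab hb3 hpow
    have hle : 2 ^ a ≤ 2 ^ b := Nat.pow_le_pow_right (by norm_num) hab
    have e : 2 ^ a + (2 ^ b - 2 ^ a) = 2 ^ b := by omega
    have h1 : u ^ 2 ^ a * u ^ (2 ^ b - 2 ^ a) = u ^ 2 ^ a * 1 := by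
      rw [mul_one, ← pow_add, e, ← hpow]
    have h2 : u ^ (2 ^ b - 2 ^ a) = 1 := mul_left_cancel₀ (pow_ne_zero _ hu) h1
    have hdvd : (7 : ℕ) ∣ (2 ^ b - 2 ^ a) := h7 ▸ orderOf_dvd_of_pow_eq_one h2
    have hb4 : 2 ^ b ≤ 4 := by
      calc 2 ^ b ≤ 2 ^ 2 := Nat.pow_le_pow_right (by norm_num) (by omega)
        _ = 4 := by norm_num
    have hm : 2 ^ b - 2 ^ a < 7 := lt_of_le_of_lt (Nat.sub_le _ _) (by omega)
    have h0 : 2 ^ b - 2 ^ a = 0 := Nat.eq_zero_of_dvd_of_lt hdvd hm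
    have heq : 2 ^ a = 2 ^ b := by omega
    exact Nat.pow_right_injective (le_refl 2) heq
  rcases le_total k j with hle | hle
  · exact key k j hle hj h
  · exact (key j k hle hk h.symm).symm

lemma nf_unique {c d : F8} {k j : ℕ} (hk : k < 3) (hj : j < 3)
    (h : ∀ x : F8, tr x = 0 → x ^ 2 ^ k + c = x ^ 2 ^ j + d) : c = d ∧ k = j := by
  have hz : (0 : F8) ^ 2 ^ k = 0 := zero_pow (by positivity)
  have hz' : (0 : F8) ^ 2 ^ j = 0 := zero_pow (by positivity)
  have hcd : c = d := by
    have := h 0 tr_zero'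
    rwa [hz, hz', zero_add, zero_add] at this
  refine ⟨hcd, ?_⟩
  obtain ⟨u, hu0, hune⟩ := exists_u
  have hu1 : u ≠ 1 := by
    intro h1
    rw [h1] at hu0
    exact one_not_tr hu0
  have := h u hu0
  rw [hcd] at this
  exact exp_inj hune hu1 hk hj (add_right_cancel this)

lemma nf_eq {c d : F8} {k j : ℕ} (hk : k < 3) (hj : j < 3)
    (heq : tauE c * frobE ^ k = tauE d * frobE ^ j) : c = d ∧ k = j := by
  apply nf_unique hk hj
  intro x hx
  have := congrFun (congrArg (fun (f : E) => f ![x, 0, 1]) heq) 0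
  simpa [nf_eval] using this

lemma chi_inj : Function.Injective chi := by
  intro f g h
  obtain ⟨c, k, hc, hk, hf⟩ := nf f.2
  obtain ⟨d, j, hd, hj, hg⟩ := nf g.2
  have hval : ∀ x : F8, tr x = 0 → x ^ 2 ^ k + c = x ^ 2 ^ j + d := by
    intro x hx0
    have h1 := congrArg Subtype.val (Equiv.ext_iff.1 h ⟨x, hx0⟩)
    change (f.1 ![x, 0, 1]) 0 = (g.1 ![x, 0, 1]) 0 at h1
    rw [hf, hg, nf_eval, nf_eval] at h1
    simpa using h1
  obtain ⟨hcd, hkj⟩ := nf_unique hk hj hval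
  apply Subtype.ext
  rw [hf, hg, hcd, hkj]

instance : Finite E := inferInstanceAs (Finite ((Fin 3 → F8) → (Fin 3 → F8)))
noncomputable instance : Fintype M := Fintype.ofFinite M

lemma card_M : Fintype.card M = 12 := by
  have hb : Function.Bijective
      (fun p : K × Fin 3 =>
        (⟨tauE p.1.1 * frobE ^ (p.2 : ℕ),
          mul_mem (tauE_mem p.1.2) (pow_mem frobE_mem _)⟩ : M)) := by
    constructor
    · rintro ⟨⟨c, hc⟩, k⟩ ⟨⟨d, hd⟩, j⟩ hpq
      have := congrArg Subtype.val hpq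
      simp only at this
      obtain ⟨hcd, hkj⟩ := nf_eq k.2 j.2 this
      simp [Prod.ext_iff, Subtype.ext_iff, Fin.ext_iff, hcd, hkj]
    · rintro ⟨f, hfM⟩
      obtain ⟨c, k, hc, hk, hf⟩ := nf hfM
      exact ⟨(⟨c, hc⟩, ⟨k, hk⟩), Subtype.ext hf.symm⟩
  rw [← Fintype.card_of_bijective hb, Fintype.card_prod, card_K, Fintype.card_fin]

noncomputable def permME : Equiv.Perm K ≃* Equiv.Perm (Fin 4) :=
  { Equiv.permCongr (Fintype.equivFinOfCardEq card_K) with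
    map_mul' := by
      intro p q
      ext x
      simp [Equiv.permCongr_apply, Equiv.Perm.mul_apply] }

noncomputable def chi4 : M →* Equiv.Perm (Fin 4) :=
  permME.toMonoidHom.comp chi

noncomputable def sgn : M →* ℤˣ :=
  Equiv.Perm.sign.comp chi4

lemma units_cube {a : ℤˣ} (h : a ^ 3 = 1) : a = 1 := by
  have h2 : a * a = 1 := Int.units_mul_self a
  calc a = a ^ 3 := by rw [pow_succ, pow_two, h2, one_mul]
    _ = 1 := h

lemma frobM_cube : (⟨frobE, frobE_mem⟩ : M) ^ 3 = 1 := by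
  apply Subtype.ext
  rw [SubmonoidClass.coe_pow]
  exact frob_cube

lemma sgn_eq_one (f : M) : sgn f = 1 := by
  obtain ⟨f, hf⟩ := f
  induction hf using Submonoid.closure_induction with
  | one =>
    show sgn 1 = 1
    exact map_one sgn
  | mul x y hx hy ihx ihy =>
    have h1 : sgn ((⟨x, show x ∈ M from hx⟩ : M) * ⟨y, show y ∈ M from hy⟩) = 1 := by
      rw [map_mul]
      rw [show sgn ⟨x, show x ∈ M from hx⟩ = 1 from ihx,
        show sgn ⟨y, show y ∈ M from hy⟩ = 1 from ihy, one_mul]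
    exact h1
  | mem x hx =>
    have hsF : sgn ⟨frobE, frobE_mem⟩ = 1 := by
      apply units_cube
      rw [← map_pow, frobM_cube, map_one]
    rcases hx with h | ⟨c, hc, rfl⟩
    · -- x = frobMap
      have : (⟨x, Submonoid.subset_closure (Or.inl h)⟩ : M) = ⟨frobE, frobE_mem⟩ := by
        apply Subtype.ext
        exact h
      rw [this]
      exact hsF
    · -- x = tauMap c
      set A : M := ⟨tauE c, tauE_mem hc⟩ with hA
      set B : M := ⟨tauE (c ^ 2), tauE_mem (tr_sq hc)⟩ with hB
      have hc4 : tr (c ^ 4) = 0 := by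
        have : (c ^ 2) ^ 2 = c ^ 4 := by ring
        rw [← this]
        exact tr_sq (tr_sq hc)
      set C : M := ⟨tauE (c ^ 4), tauE_mem hc4⟩ with hC
      set Fr : M := ⟨frobE, frobE_mem⟩ with hFr
      have e1 : Fr * A = B * Fr := Subtype.ext (frob_tau c)
      have e2 : Fr * B = C * Fr := by
        apply Subtype.ext
        show frobE * tauE (c ^ 2) = tauE (c ^ 4) * frobE
        rw [frob_tau (c ^ 2)]
        congr 2
        ring
      have two0 : (2 : F8) = 0 := by
        have := CharTwo.add_self_eq_zero (1 : F8)
        linear_combination this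
      have e3 : A * B = C := by
        apply Subtype.ext
        show tauE c * tauE (c ^ 2) = tauE (c ^ 4)
        rw [tau_mul]
        have harg : c + c ^ 2 = c ^ 4 := by linear_combination hc - (c ^ 4 : F8) * two0
        rw [harg]
      have s1 : sgn A = sgn B := by
        have := congrArg sgn e1
        rw [map_mul, map_mul, hsF] at this
        rw [← one_mul (sgn A), this, mul_one]
      have s2 : sgn B = sgn C := by
        have := congrArg sgn e2
        rw [map_mul, map_mul, hsF] at this
        rw [← one_mul (sgn B), this, mul_one]
      have s3 : sgn A * sgn B = sgn C := by rw [← map_mul, e3]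
      have : sgn A * sgn A = sgn A * 1 := by
        rw [mul_one]
        calc sgn A * sgn A = sgn A * sgn B := by rw [s1]
          _ = sgn C := s3
          _ = sgn B := s2.symm
          _ = sgn A := s1.symm
      have hAone := mul_left_cancel this
      show sgn (⟨tauMap c, _⟩ : M) = 1
      exact hAone

lemma chi4_mem (f : M) : chi4 f ∈ alternatingGroup (Fin 4) := by
  rw [Equiv.Perm.mem_alternatingGroup]
  exact sgn_eq_one f

noncomputable def chiA : M →* alternatingGroup (Fin 4) :=
  MonoidHom.codRestrict chi4 _ chi4_mem

lemma chiA_inj : Function.Injective chiA := by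
  intro f g h
  apply chi_inj
  apply permME.injective
  exact congrArg Subtype.val h

lemma card_A4 : Fintype.card (alternatingGroup (Fin 4)) = 12 := by
  have h := two_mul_card_alternatingGroup (α := Fin 4)
  rw [Fintype.card_perm, Fintype.card_fin] at h
  have h24 : Nat.factorial 4 = 24 := by decide
  rw [h24] at h
  omega

lemma chiA_bij : Function.Bijective chiA :=
  (Fintype.bijective_iff_injective_and_card chiA).2 ⟨chiA_inj, by rw [card_M, card_A4]⟩

/-- Conjugation by the Frobenius `Φ` permutes the nontrivial elements of
`Γ = {τ_c : tr c = 0}` (namely `Φ ∘ τ_c ∘ Φ⁻¹ = τ_{c²}`), and the group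
generated by `Γ` and `Φ` (inside the monoid of self-maps of `F₈³` under
composition) is isomorphic to the alternating group `A₄`. -/
theorem stmt_7 :
    (∀ c : GaloisField 2 3, frobMap ∘ tauMap c = tauMap (c ^ 2) ∘ frobMap) ∧
    Nonempty
      ((Submonoid.closure
          ({frobMap} ∪ {f | ∃ c : GaloisField 2 3, c + c ^ 2 + c ^ 4 = 0 ∧ f = tauMap c} :
            Set (Function.End (Fin 3 → GaloisField 2 3)))) ≃*
        alternatingGroup (Fin 4)) := by
  constructor
  · intro c
    exact frob_tau c
  · exact ⟨MulEquiv.ofBijective chiA chiA_bij⟩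
end

section
/- In PG(2,q) with q even, every line meets the hyperoval O = K ∪ {N} (a nonsingular conic together with its nucleus) in exactly 0 or 2 points. -/
open Matrix

section Helpers

variable {F : Type*} [Field F]

private lemma conic_pt_ne_zero (t : F) : (![t, 1, t ^ 2] : Fin 3 → F) ≠ 0 := by
  intro h
  have := congrFun h 1
  simp at this

private lemma dot3 (ℓ v : Fin 3 → F) :
    ℓ ⬝ᵥ v = ℓ 0 * v 0 + ℓ 1 * v 1 + ℓ 2 * v 2 := by
  simp [dotProduct, Fin.sum_univ_three]

private lemma mk_eq_nucleus_iff (v : Fin 3 → F) (hv : v ≠ 0) :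
    Projectivization.mk F v hv = Projectivization.mk F ![1, 0, 0] (by simp) ↔
      v 1 = 0 ∧ v 2 = 0 := by
  rw [Projectivization.mk_eq_mk_iff']
  constructor
  · rintro ⟨a, ha⟩
    have h1 := congrFun ha 1
    have h2 := congrFun ha 2
    simp at h1 h2
    exact ⟨h1.symm, h2.symm⟩
  · rintro ⟨h1, h2⟩
    refine ⟨v 0, ?_⟩
    funext i
    fin_cases i <;> simp [h1, h2]

private lemma P_inj {t t' : F}
    (h : Projectivization.mk F ![t, 1, t ^ 2] (conic_pt_ne_zero t) =
      Projectivization.mk F ![t', 1, t' ^ 2] (conic_pt_ne_zero t')) : t = t' := by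
  rw [Projectivization.mk_eq_mk_iff'] at h
  obtain ⟨a, ha⟩ := h
  have h1 := congrFun ha 1
  have h0 := congrFun ha 0
  simp at h1 h0
  rw [h1, one_mul] at h0
  exact h0.symm

private lemma P_ne_001 (t : F) :
    Projectivization.mk F ![t, 1, t ^ 2] (conic_pt_ne_zero t) ≠
      Projectivization.mk F ![0, 0, 1] (by simp) := by
  rw [Ne, Projectivization.mk_eq_mk_iff']
  rintro ⟨a, ha⟩
  have h1 := congrFun ha 1
  simp at h1

private lemma P_ne_100 (t : F) :
    Projectivization.mk F ![t, 1, t ^ 2] (conic_pt_ne_zero t) ≠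
      Projectivization.mk F ![1, 0, 0] (by simp) := by
  rw [Ne, Projectivization.mk_eq_mk_iff']
  rintro ⟨a, ha⟩
  have h1 := congrFun ha 1
  simp at h1

private lemma ne_001_100 :
    (Projectivization.mk F ![0, 0, 1] (by simp) : Projectivization F (Fin 3 → F)) ≠
      Projectivization.mk F ![1, 0, 0] (by simp) := by
  rw [Ne, Projectivization.mk_eq_mk_iff']
  rintro ⟨a, ha⟩
  have h2 := congrFun ha 2
  simp at h2

/-- Membership characterization of the hyperoval-line intersection. -/
private lemma mem_iff [CharP F 2] (ℓ : Fin 3 → F) (p : Projectivization F (Fin 3 → F)) :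
    (((p.rep 0) ^ 2 + p.rep 1 * p.rep 2 = 0 ∨
        p = Projectivization.mk F ![1, 0, 0] (by simp)) ∧ ℓ ⬝ᵥ p.rep = 0) ↔
      ((∃ t : F, ℓ 2 * t ^ 2 + ℓ 0 * t + ℓ 1 = 0 ∧
          p = Projectivization.mk F ![t, 1, t ^ 2] (conic_pt_ne_zero t)) ∨
        (ℓ 2 = 0 ∧ p = Projectivization.mk F ![0, 0, 1] (by simp)) ∨
        (ℓ 0 = 0 ∧ p = Projectivization.mk F ![1, 0, 0] (by simp))) := by
  have htwo : (2 : F) = 0 := by exact_mod_cast CharP.cast_eq_zero F 2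
  have hpr : Projectivization.mk F p.rep p.rep_nonzero = p := Projectivization.mk_rep p
  constructor
  · rintro ⟨hO, hline⟩
    rw [dot3] at hline
    have hO' : (p.rep 0) ^ 2 + p.rep 1 * p.rep 2 = 0 ∨ (p.rep 1 = 0 ∧ p.rep 2 = 0) := by
      rcases hO with h | h
      · exact Or.inl h
      · exact Or.inr ((mk_eq_nucleus_iff _ p.rep_nonzero).1 (hpr.trans h))
    by_cases h1 : p.rep 1 = 0
    · rcases hO' with hc | ⟨_, h2⟩
      · -- rep 0 = 0, point is (0,0,1)
        have h0 : p.rep 0 = 0 := by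
          have hsq : (p.rep 0) ^ 2 = 0 := by linear_combination hc - p.rep 2 * h1
          exact pow_eq_zero_iff (n := 2) (by norm_num) |>.1 hsq
        have h2 : p.rep 2 ≠ 0 := by
          intro h2
          exact p.rep_nonzero (funext fun i => by fin_cases i <;> simp [h0, h1, h2])
        refine Or.inr (Or.inl ⟨?_, ?_⟩)
        · rw [h0, h1] at hline
          simpa [h2] using hline
        · rw [← hpr, Projectivization.mk_eq_mk_iff']
          refine ⟨p.rep 2, ?_⟩
          funext i
          fin_cases i <;> simp [h0, h1]
      · -- point is the nucleus
        have h0 : p.rep 0 ≠ 0 := by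
          intro h0
          exact p.rep_nonzero (funext fun i => by fin_cases i <;> simp [h0, h1, h2])
        refine Or.inr (Or.inr ⟨?_, ?_⟩)
        · rw [h1, h2] at hline
          simpa [h0] using hline
        · rw [← hpr]
          exact (mk_eq_nucleus_iff _ p.rep_nonzero).2 ⟨h1, h2⟩
    · -- rep 1 ≠ 0 : conic point (t, 1, t²) with t = rep 0 / rep 1
      have hcon : (p.rep 0) ^ 2 + p.rep 1 * p.rep 2 = 0 := by
        rcases hO' with h | ⟨h, _⟩
        · exact h
        · exact absurd h h1
      set t : F := p.rep 0 / p.rep 1 with ht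
      have hinv : p.rep 1 * (p.rep 1)⁻¹ = 1 := mul_inv_cancel₀ h1
      have hmul : p.rep 1 * p.rep 2 = (p.rep 0) ^ 2 := by
        linear_combination -hcon + (p.rep 1 * p.rep 2) * htwo
      have h01 : p.rep 1 * t = p.rep 0 := by
        rw [ht]
        field_simp
      have h2' : p.rep 2 = p.rep 1 * t ^ 2 := by
        refine mul_left_cancel₀ h1 ?_
        linear_combination hmul - (p.rep 0 + p.rep 1 * t) * h01
      refine Or.inl ⟨t, ?_, ?_⟩
      · have hL : p.rep 1 * (ℓ 2 * t ^ 2 + ℓ 0 * t + ℓ 1) = 0 := by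
          linear_combination hline + ℓ 0 * h01 - ℓ 2 * h2'
        exact (mul_eq_zero.1 hL).resolve_left h1
      · rw [← hpr, Projectivization.mk_eq_mk_iff']
        refine ⟨p.rep 1, ?_⟩
        funext i
        fin_cases i <;> simp [h01, h2'.symm]
  · rintro (⟨t, ht, rfl⟩ | ⟨hc, rfl⟩ | ⟨ha, rfl⟩)
    · obtain ⟨u, hu⟩ := Projectivization.exists_smul_eq_mk_rep F
        (![t, 1, t ^ 2] : Fin 3 → F) (conic_pt_ne_zero t)
      rw [Units.smul_def] at hu
      refine ⟨Or.inl ?_, ?_⟩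
      · rw [← hu]
        simp only [Pi.smul_apply, smul_eq_mul, Matrix.cons_val_zero, Matrix.cons_val_one,
          Matrix.head_cons]
        have e2 : (![t, 1, t ^ 2] : Fin 3 → F) 2 = t ^ 2 := by simp
        rw [e2]
        linear_combination ((u : F) ^ 2 * t ^ 2) * htwo
      · rw [← hu, dot3]
        simp only [Pi.smul_apply, smul_eq_mul, Matrix.cons_val_zero, Matrix.cons_val_one,
          Matrix.head_cons]
        have e2 : (![t, 1, t ^ 2] : Fin 3 → F) 2 = t ^ 2 := by simp
        rw [e2]
        linear_combination (u : F) * ht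
    · obtain ⟨u, hu⟩ := Projectivization.exists_smul_eq_mk_rep F
        (![0, 0, 1] : Fin 3 → F) (by simp)
      rw [Units.smul_def] at hu
      refine ⟨Or.inl ?_, ?_⟩
      · rw [← hu]
        simp only [Pi.smul_apply, smul_eq_mul, Matrix.cons_val_zero, Matrix.cons_val_one,
          Matrix.head_cons]
        ring
      · rw [← hu, dot3]
        simp only [Pi.smul_apply, smul_eq_mul, Matrix.cons_val_zero, Matrix.cons_val_one,
          Matrix.head_cons]
        have e2 : (![0, 0, 1] : Fin 3 → F) 2 = 1 := by simp
        rw [e2]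
        linear_combination (u : F) * hc
    · obtain ⟨u, hu⟩ := Projectivization.exists_smul_eq_mk_rep F
        (![1, 0, 0] : Fin 3 → F) (by simp)
      rw [Units.smul_def] at hu
      refine ⟨Or.inr rfl, ?_⟩
      rw [← hu, dot3]
      simp only [Pi.smul_apply, smul_eq_mul, Matrix.cons_val_zero, Matrix.cons_val_one,
        Matrix.head_cons]
      have e2 : (![1, 0, 0] : Fin 3 → F) 2 = 0 := by simp
      rw [e2]
      linear_combination (u : F) * ha

end Helpers

/-- In `PG(2,q)`, `q` even, every line meets the hyperoval `O = K ∪ {N}`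
(the conic `X² + YZ = 0` together with its nucleus `(1,0,0)`) in exactly
0 or 2 points. -/
theorem stmt_17 (F : Type*) [Field F] [Fintype F] [CharP F 2]
    (ℓ : Fin 3 → F) (hℓ : ℓ ≠ 0) :
    ({p : Projectivization F (Fin 3 → F) |
        ((p.rep 0) ^ 2 + p.rep 1 * p.rep 2 = 0 ∨
          p = Projectivization.mk F ![1, 0, 0] (by simp)) ∧
        ℓ ⬝ᵥ p.rep = 0} : Set (Projectivization F (Fin 3 → F))).ncard = 0 ∨
    ({p : Projectivization F (Fin 3 → F) |
        ((p.rep 0) ^ 2 + p.rep 1 * p.rep 2 = 0 ∨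
          p = Projectivization.mk F ![1, 0, 0] (by simp)) ∧
        ℓ ⬝ᵥ p.rep = 0} : Set (Projectivization F (Fin 3 → F))).ncard = 2 := by
  have htwo : (2 : F) = 0 := by exact_mod_cast CharP.cast_eq_zero F 2
  set S : Set (Projectivization F (Fin 3 → F)) :=
    {p : Projectivization F (Fin 3 → F) |
        ((p.rep 0) ^ 2 + p.rep 1 * p.rep 2 = 0 ∨
          p = Projectivization.mk F ![1, 0, 0] (by simp)) ∧
        ℓ ⬝ᵥ p.rep = 0} with hS
  have key : ∀ p, p ∈ S ↔
      ((∃ t : F, ℓ 2 * t ^ 2 + ℓ 0 * t + ℓ 1 = 0 ∧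
          p = Projectivization.mk F ![t, 1, t ^ 2] (conic_pt_ne_zero t)) ∨
        (ℓ 2 = 0 ∧ p = Projectivization.mk F ![0, 0, 1] (by simp)) ∨
        (ℓ 0 = 0 ∧ p = Projectivization.mk F ![1, 0, 0] (by simp))) := by
    intro p
    rw [hS, Set.mem_setOf_eq]
    exact mem_iff ℓ p
  by_cases hc : ℓ 2 = 0
  · by_cases ha : ℓ 0 = 0
    · -- line Y = 0 : meets at (0,0,1) and (1,0,0)
      have hb : ℓ 1 ≠ 0 := by
        intro hb
        apply hℓ
        funext i
        fin_cases i <;> simp [ha, hb, hc]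
      right
      have hSet : S = {Projectivization.mk F ![0, 0, 1] (by simp),
          Projectivization.mk F ![1, 0, 0] (by simp)} := by
        ext p
        simp only [key, Set.mem_insert_iff, Set.mem_singleton_iff]
        constructor
        · rintro (⟨t, ht, rfl⟩ | ⟨_, rfl⟩ | ⟨_, rfl⟩)
          · exact absurd (by linear_combination ht - t ^ 2 * hc - t * ha) hb
          · exact Or.inl rfl
          · exact Or.inr rfl
        · rintro (rfl | rfl)
          · exact Or.inr (Or.inl ⟨hc, rfl⟩)
          · exact Or.inr (Or.inr ⟨ha, rfl⟩)
      rw [hSet]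
      exact Set.ncard_pair ne_001_100
    · -- c = 0, a ≠ 0: one root t0 = b/a, plus (0,0,1)
      right
      have hinv0 : ℓ 0 * (ℓ 0)⁻¹ = 1 := mul_inv_cancel₀ ha
      set t0 : F := ℓ 1 / ℓ 0 with ht0
      have hroot : ℓ 2 * t0 ^ 2 + ℓ 0 * t0 + ℓ 1 = 0 := by
        rw [ht0, div_eq_mul_inv]
        linear_combination (ℓ 1 * (ℓ 0)⁻¹) ^ 2 * hc + ℓ 1 * hinv0 + ℓ 1 * htwo
      have hSet : S = {Projectivization.mk F ![t0, 1, t0 ^ 2] (conic_pt_ne_zero t0),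
          Projectivization.mk F ![0, 0, 1] (by simp)} := by
        ext p
        simp only [key, Set.mem_insert_iff, Set.mem_singleton_iff]
        constructor
        · rintro (⟨t, ht, rfl⟩ | ⟨_, rfl⟩ | ⟨ha', _⟩)
          · have heq : t = t0 := by
              rw [ht0, div_eq_mul_inv]
              linear_combination (ℓ 0)⁻¹ * ht - (ℓ 0)⁻¹ * t ^ 2 * hc - t * hinv0
                - ℓ 1 * (ℓ 0)⁻¹ * htwo
            subst heq
            exact Or.inl rfl
          · exact Or.inr rfl
          · exact absurd ha' ha
        · rintro (rfl | rfl)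
          · exact Or.inl ⟨t0, hroot, rfl⟩
          · exact Or.inr (Or.inl ⟨hc, rfl⟩)
      rw [hSet]
      exact Set.ncard_pair (P_ne_001 t0)
  · have hinvc : ℓ 2 * (ℓ 2)⁻¹ = 1 := mul_inv_cancel₀ hc
    by_cases ha : ℓ 0 = 0
    · -- c ≠ 0, a = 0: unique root t0 with t0² = b/c, plus nucleus
      right
      obtain ⟨t0, ht0⟩ : ∃ t0 : F, t0 ^ 2 = ℓ 1 / ℓ 2 := by
        obtain ⟨s, hs⟩ := (bijective_frobenius F 2).2 (ℓ 1 / ℓ 2)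
        exact ⟨s, by rwa [frobenius_def] at hs⟩
      have hroot : ℓ 2 * t0 ^ 2 + ℓ 0 * t0 + ℓ 1 = 0 := by
        rw [ht0, div_eq_mul_inv]
        linear_combination t0 * ha + ℓ 1 * hinvc + ℓ 1 * htwo
      have hSet : S = {Projectivization.mk F ![t0, 1, t0 ^ 2] (conic_pt_ne_zero t0),
          Projectivization.mk F ![1, 0, 0] (by simp)} := by
        ext p
        simp only [key, Set.mem_insert_iff, Set.mem_singleton_iff]
        constructor
        · rintro (⟨t, ht, rfl⟩ | ⟨hc', _⟩ | ⟨_, rfl⟩)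
          · have hsq : (t + t0) ^ 2 = 0 := by
              rw [CharTwo.add_sq]
              linear_combination (ℓ 2)⁻¹ * ht + ht0 - t ^ 2 * hinvc - (ℓ 2)⁻¹ * t * ha
            have h0 : t + t0 = 0 := pow_eq_zero_iff (n := 2) (by norm_num) |>.1 hsq
            have heq : t = t0 := by linear_combination h0 - t0 * htwo
            subst heq
            exact Or.inl rfl
          · exact absurd hc' hc
          · exact Or.inr rfl
        · rintro (rfl | rfl)
          · exact Or.inl ⟨t0, hroot, rfl⟩
          · exact Or.inr (Or.inr ⟨ha, rfl⟩)
      rw [hSet]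
      exact Set.ncard_pair (P_ne_100 t0)
    · -- c ≠ 0, a ≠ 0 : 0 or 2 conic points
      by_cases hroot : ∃ t : F, ℓ 2 * t ^ 2 + ℓ 0 * t + ℓ 1 = 0
      · right
        obtain ⟨t0, ht0⟩ := hroot
        set t1 : F := t0 + ℓ 0 / ℓ 2 with ht1def
        have ht1 : ℓ 2 * t1 ^ 2 + ℓ 0 * t1 + ℓ 1 = 0 := by
          rw [ht1def, div_eq_mul_inv, CharTwo.add_sq]
          linear_combination ht0 + (ℓ 0 ^ 2 * (ℓ 2)⁻¹) * hinvc + (ℓ 0 ^ 2 * (ℓ 2)⁻¹) * htwo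
        have hne : t0 ≠ t1 := by
          rw [ht1def]
          intro h
          have hd : ℓ 0 / ℓ 2 = 0 := by linear_combination -h
          exact ha ((div_eq_zero_iff.mp hd).resolve_right hc)
        have hSet : S = {Projectivization.mk F ![t0, 1, t0 ^ 2] (conic_pt_ne_zero t0),
            Projectivization.mk F ![t1, 1, t1 ^ 2] (conic_pt_ne_zero t1)} := by
          ext p
          simp only [key, Set.mem_insert_iff, Set.mem_singleton_iff]
          constructor
          · rintro (⟨t, ht, rfl⟩ | ⟨hc', _⟩ | ⟨ha', _⟩)
            · have hfac : (t + t0) * (ℓ 2 * (t + t0) + ℓ 0) = 0 := by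
                linear_combination ht - ht0 + (ℓ 2 * t0 ^ 2 + ℓ 0 * t0 + ℓ 2 * t * t0) * htwo
              rcases mul_eq_zero.1 hfac with h | h
              · have heq : t = t0 := by linear_combination h - t0 * htwo
                subst heq
                exact Or.inl rfl
              · have heq : t = t1 := by
                  rw [ht1def, div_eq_mul_inv]
                  linear_combination (ℓ 2)⁻¹ * h - (t + t0) * hinvc
                    - (t0 + ℓ 0 * (ℓ 2)⁻¹) * htwo
                subst heq
                exact Or.inr rfl
            · exact absurd hc' hc
            · exact absurd ha' ha
          · rintro (rfl | rfl)
            · exact Or.inl ⟨t0, ht0, rfl⟩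
            · exact Or.inl ⟨t1, ht1, rfl⟩
        rw [hSet]
        exact Set.ncard_pair (fun h => hne (P_inj h))
      · left
        have hSet : S = ∅ := by
          ext p
          simp only [key, Set.mem_empty_iff_false, iff_false]
          rintro (⟨t, ht, _⟩ | ⟨hc', _⟩ | ⟨ha', _⟩)
          · exact hroot ⟨t, ht⟩
          · exact hc hc'
          · exact ha ha'
        rw [hSet, Set.ncard_empty]
end

section
/- In the Ree group Ree(q), q = 3^{2n+1}, the intersection of any two distinct Sylow 3-subgroups is trivial. -/
/-- In the Ree group `Ree(q)`, `q = 3^(2n+1)` — a group of order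
`(q³+1)q³(q−1)` in which the stabilizer of any two distinct points of the
2-transitive action on the Sylow 3-subgroups (i.e. the intersection of the
normalizers of two distinct Sylow 3-subgroups) is cyclic of order `q − 1` —
any two distinct Sylow 3-subgroups intersect trivially. -/
theorem stmt_18 (n q : ℕ) (hq : q = 3 ^ (2 * n + 1))
    (G : Type*) [Group G] [Fintype G]
    (hcard : Fintype.card G = (q ^ 3 + 1) * q ^ 3 * (q - 1))
    (hstab : ∀ P Q : Sylow 3 G, P ≠ Q →
      IsCyclic ↥(Subgroup.normalizer ((P : Subgroup G) : Set G) ⊓ Subgroup.normalizer ((Q : Subgroup G) : Set G)) ∧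
      Nat.card ↥(Subgroup.normalizer ((P : Subgroup G) : Set G) ⊓ Subgroup.normalizer ((Q : Subgroup G) : Set G)) = q - 1) :
    ∀ P Q : Sylow 3 G, P ≠ Q → (P : Subgroup G) ⊓ (Q : Subgroup G) = ⊥ := by
  intro P Q hPQ
  -- P ⊓ Q is a 3-group
  have hp : IsPGroup 3 ↥((P : Subgroup G) ⊓ (Q : Subgroup G)) :=
    (P.isPGroup').to_inf_left
  haveI : Fact (Nat.Prime 3) := ⟨Nat.prime_three⟩
  obtain ⟨k, hk⟩ := IsPGroup.iff_card.mp hp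
  -- P ⊓ Q ≤ normalizer P ⊓ normalizer Q
  have hle : (P : Subgroup G) ⊓ (Q : Subgroup G) ≤
      Subgroup.normalizer ((P : Subgroup G) : Set G) ⊓ Subgroup.normalizer ((Q : Subgroup G) : Set G) :=
    inf_le_inf Subgroup.le_normalizer Subgroup.le_normalizer
  have hdvd : Nat.card ((P : Subgroup G) ⊓ (Q : Subgroup G) : Subgroup G) ∣ q - 1 := by
    rw [← (hstab P Q hPQ).2]
    exact Subgroup.card_dvd_of_le hle
  rw [hk] at hdvd
  -- 3 does not divide q - 1
  have h3q : (3 : ℕ) ∣ q := hq ▸ dvd_pow_self 3 (Nat.succ_ne_zero _)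
  have hqpos : 3 ≤ q := by
    rw [hq]
    calc (3:ℕ) = 3 ^ 1 := rfl
    _ ≤ 3 ^ (2 * n + 1) := Nat.pow_le_pow_right (by norm_num) (by omega)
  have hcop : Nat.Coprime 3 (q - 1) := by
    rw [Nat.Prime.coprime_iff_not_dvd Nat.prime_three]
    intro h
    omega
  have : (3 : ℕ) ^ k = 1 := (hcop.pow_left k).eq_one_of_dvd hdvd
  rw [this] at hk
  exact Subgroup.eq_bot_of_card_eq _ hk
end
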